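/- The group with presentation ⟨b₁, b₂ ∣ b₁b₂² = 1, b₂b₁² = 1⟩ is isomorphic to the cyclic group ℤ/3ℤ. -/

import Mathlib

/-!
The group with presentation ⟨b₁, b₂ ∣ b₁b₂² = 1, b₂b₁² = 1⟩ is isomorphic to ℤ/3ℤ.
Generators: b₁ = 0, b₂ = 1.
-/

namespace Stmt2

def b₁ : FreeGroup (Fin 2) := FreeGroup.of 0
def b₂ : FreeGroup (Fin 2) := FreeGroup.of 1

def rels : Set (FreeGroup (Fin 2)) :=
  { b₁ * b₂ * b₂, b₂ * b₁ * b₁ }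

abbrev G := PresentedGroup rels
abbrev M := Multiplicative (ZMod 3)

def fmap : Fin 2 → M := fun _ => Multiplicative.ofAdd 1

lemma rels_check : ∀ r ∈ rels, FreeGroup.lift fmap r = 1 := by
  rintro r (rfl | rfl) <;> simp [b₁, b₂, fmap] <;> decide

def f : G →* M := PresentedGroup.toGroup rels_check

lemma rel_one (r : FreeGroup (Fin 2)) (hr : r ∈ rels) :
    (QuotientGroup.mk r : G) = 1 := by
  rw [QuotientGroup.eq_one_iff]
  exact Subgroup.subset_normalClosure hr

lemma x3 : (PresentedGroup.of 1 : G) ^ 3 = 1 := by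
  set x0 : G := PresentedGroup.of 0
  set x1 : G := PresentedGroup.of 1
  have h1 : x0 * x1 * x1 = 1 := rel_one _ (Or.inl rfl)
  have h2 : x1 * x0 * x0 = 1 := rel_one _ (Or.inr rfl)
  have hx0 : x0 = (x1 * x1)⁻¹ := by
    rw [eq_inv_iff_mul_eq_one]; rw [mul_assoc] at h1; exact h1
  rw [hx0] at h2
  have : x1 ^ 3 = (x1 * (x1 * x1)⁻¹ * (x1 * x1)⁻¹)⁻¹ := by group
  rw [this, h2, inv_one]

lemma of0_eq : (PresentedGroup.of 0 : G) = PresentedGroup.of 1 := by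
  set x0 : G := PresentedGroup.of 0
  set x1 : G := PresentedGroup.of 1
  have h1 : x0 * x1 * x1 = 1 := rel_one _ (Or.inl rfl)
  have h2 : x0 = (x1 * x1)⁻¹ := by
    rw [eq_inv_iff_mul_eq_one, ← mul_assoc]; exact h1
  have h3 : x1 = (x1 * x1)⁻¹ := by
    rw [eq_inv_iff_mul_eq_one, show x1 * (x1 * x1) = x1 ^ 3 by rw [pow_succ, pow_two, mul_assoc]]
    exact x3
  rw [h2, ← h3]

def g : M →* G :=
  AddMonoidHom.toMultiplicativeLeft
    (ZMod.lift 3 ⟨zmultiplesHom (Additive G) (Additive.ofMul (PresentedGroup.of 1)), by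
      have h3 := congrArg (@Additive.ofMul G) x3
      simp only [ofMul_pow, ofMul_one] at h3
      rw [zmultiplesHom_apply, natCast_zsmul]
      exact h3⟩)

lemma g_one : g (Multiplicative.ofAdd 1) = PresentedGroup.of 1 := by
  unfold g
  rw [show (1 : ZMod 3) = ((1 : ℤ) : ZMod 3) by norm_num]
  simp only [AddMonoidHom.toMultiplicativeLeft, Equiv.coe_fn_mk, MonoidHom.coe_mk,
    OneHom.coe_mk, toAdd_ofAdd, ZMod.lift_coe, zmultiplesHom_apply, one_zsmul,
    toMul_ofMul]
  show Additive.toMul ((ZMod.lift 3 _) (Multiplicative.toAdd (Multiplicative.ofAdd ((1 : ℤ) : ZMod 3)))) = _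
  simp only [toAdd_ofAdd, ZMod.lift_coe, zmultiplesHom_apply, one_zsmul, toMul_ofMul]

theorem reduced_presentation_Z3 :
    Nonempty (PresentedGroup rels ≃* Multiplicative (ZMod 3)) := by
  refine ⟨{ toFun := f, invFun := g, map_mul' := f.map_mul,
            left_inv := ?_, right_inv := ?_ }⟩
  · have key : g.comp f = MonoidHom.id G := by
      ext i
      fin_cases i <;>
        simp [f, PresentedGroup.toGroup.of, fmap, g_one]
      · exact of0_eq.symm
    intro a
    exact DFunLike.congr_fun key a
  · intro m
    rw [← ofAdd_toAdd m]
    set a := Multiplicative.toAdd m with ha'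
    have ha : Multiplicative.ofAdd a = (Multiplicative.ofAdd (1 : ZMod 3)) ^ a.val := by
      rw [← ofAdd_nsmul]
      congr 1
      simp [nsmul_eq_mul, ZMod.natCast_val, ZMod.cast_id]
    rw [ha, map_pow, map_pow, g_one]
    congr 1

end Stmt2
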